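/- Define B(s) = 2 + (1-s)·(-2ψ(1-2s) - 2ψ(1+2s) + 3ψ(1-s) + 3ψ(1+s) - ψ(3/2 - s/2) - ψ(1/2 + s/2)). Then for all s ∈ [0, 1/38], 1 < B(s) < 3. -/

import Mathlib

noncomputable def digamma (x : ℝ) : ℝ := deriv (fun y => Real.log (Real.Gamma y)) x

noncomputable def B (s : ℝ) : ℝ :=
  2 + (1 - s) * (-2 * digamma (1 - 2 * s) - 2 * digamma (1 + 2 * s) +
    3 * digamma (1 - s) + 3 * digamma (1 + s) -
    digamma (3 / 2 - s / 2) - digamma (1 / 2 + s / 2))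

open Real Set Finset

lemma gammaLog_hasDeriv {x : ℝ} (hx : 0 < x) :
    HasDerivAt (fun y => Real.log (Real.Gamma y)) (digamma x) x := by
  have h1 : DifferentiableAt ℝ Real.Gamma x :=
    Real.differentiableAt_Gamma (fun m => by
      have h : -(m:ℝ) ≤ 0 := by simp
      exact (h.trans_lt hx).ne')
  have h2 : DifferentiableAt ℝ (fun y => Real.log (Real.Gamma y)) x :=
    (Real.differentiableAt_log (Real.Gamma_pos_of_pos hx).ne').comp x h1
  simpa [digamma] using h2.hasDerivAt

lemma psi_mono {x y : ℝ} (hx : 0 < x) (hxy : x ≤ y) : digamma x ≤ digamma y := by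
  rcases eq_or_lt_of_le hxy with rfl | h
  · exact le_refl _
  have hy : 0 < y := hx.trans h
  have h1 := Real.convexOn_log_Gamma.deriv_le_slope (mem_Ioi.mpr hx) (mem_Ioi.mpr hy) h
    (gammaLog_hasDeriv hx).differentiableAt
  have h2 := Real.convexOn_log_Gamma.slope_le_deriv (mem_Ioi.mpr hx) (mem_Ioi.mpr hy) h
    (gammaLog_hasDeriv hy).differentiableAt
  exact le_trans h1 h2

lemma psi_rec {x : ℝ} (hx : 0 < x) : digamma (x + 1) = digamma x + 1 / x := by
  have h1 : HasDerivAt (fun y : ℝ => Real.log (Real.Gamma (y + 1))) (digamma (x + 1)) x := by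
    have := (gammaLog_hasDeriv (show (0:ℝ) < x + 1 by linarith)).comp x
      ((hasDerivAt_id x).add_const 1)
    simpa [Function.comp_def] using this
  have h2 : HasDerivAt (fun y : ℝ => Real.log y + Real.log (Real.Gamma y))
      (1 / x + digamma x) x := by
    have := (Real.hasDerivAt_log hx.ne').add (gammaLog_hasDeriv hx)
    simpa [one_div, Pi.add_def] using this
  have heq : (fun y : ℝ => Real.log (Real.Gamma (y + 1))) =ᶠ[nhds x]
      (fun y : ℝ => Real.log y + Real.log (Real.Gamma y)) := by
    filter_upwards [eventually_gt_nhds hx] with y hy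
    rw [Real.Gamma_add_one hy.ne', Real.log_mul hy.ne' (Real.Gamma_pos_of_pos hy).ne']
  have := (h1.congr_of_eventuallyEq heq.symm).unique h2
  linarith

lemma psi_add_nat {x : ℝ} (hx : 0 < x) (n : ℕ) :
    digamma (x + n) = digamma x + ∑ k ∈ Finset.range n, 1 / (x + k) := by
  induction n with
  | zero => simp
  | succ n ih =>
    have hxn : 0 < x + n := by positivity
    have e : (x + (n + 1 : ℕ) : ℝ) = (x + n) + 1 := by push_cast; ring
    rw [e, psi_rec hxn, ih, Finset.sum_range_succ]
    ring

lemma psi_le_log {x : ℝ} (hx : 0 < x) : digamma x ≤ Real.log x := by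
  have h := Real.convexOn_log_Gamma.deriv_le_slope (mem_Ioi.mpr hx)
    (mem_Ioi.mpr (show (0:ℝ) < x + 1 by linarith)) (by linarith)
    (gammaLog_hasDeriv hx).differentiableAt
  have hs : slope (Real.log ∘ Real.Gamma) x (x + 1) = Real.log x := by
    rw [slope_def_field]
    simp only [Function.comp_apply]
    rw [Real.Gamma_add_one hx.ne',
      Real.log_mul hx.ne' (Real.Gamma_pos_of_pos hx).ne']
    field_simp
    ring
  exact hs ▸ h

lemma log_le_psi {x : ℝ} (hx : 0 < x) : Real.log x ≤ digamma (x + 1) := by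
  have h := Real.convexOn_log_Gamma.slope_le_deriv (mem_Ioi.mpr hx)
    (mem_Ioi.mpr (show (0:ℝ) < x + 1 by linarith)) (by linarith)
    (gammaLog_hasDeriv (show (0:ℝ) < x + 1 by linarith)).differentiableAt
  have hs : slope (Real.log ∘ Real.Gamma) x (x + 1) = Real.log x := by
    rw [slope_def_field]
    simp only [Function.comp_apply]
    rw [Real.Gamma_add_one hx.ne',
      Real.log_mul hx.ne' (Real.Gamma_pos_of_pos hx).ne']
    field_simp
    ring
  exact hs ▸ h

lemma log128 : Real.log 128 = 7 * Real.log 2 := by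
  rw [show (128:ℝ) = 2 ^ 7 by norm_num, Real.log_pow]
  push_cast; ring

lemma psi_ub {x u : ℝ} (hx : 0 < x)
    (h : 7 * (0.6931471808 : ℝ) + ((x + 128) / 128 - 1)
        - ∑ k ∈ Finset.range 128, 1 / (x + k) ≤ u) :
    digamma x ≤ u := by
  have h1 := psi_add_nat hx 128
  push_cast at h1
  have h2 : digamma (x + 128) ≤ Real.log (x + 128) :=
    psi_le_log (by linarith)
  have e : Real.log (x + 128) = Real.log 128 + Real.log ((x + 128) / 128) := by
    rw [← Real.log_mul (by norm_num) (by positivity)]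
    congr 1
    ring
  have h3 : Real.log ((x + 128) / 128) ≤ (x + 128) / 128 - 1 :=
    Real.log_le_sub_one_of_pos (by positivity)
  have h4 := Real.log_two_lt_d9
  rw [e, log128] at h2
  rw [h1] at h2
  norm_num at h4 h ⊢
  simp only [one_div] at h1 h2
  linarith

lemma psi_lb {x l : ℝ} (hx : 0 < x)
    (h : l ≤ 7 * (0.6931471803 : ℝ) + (1 - 128 / (x + 127))
        - ∑ k ∈ Finset.range 128, 1 / (x + k)) :
    l ≤ digamma x := by
  have h1 := psi_add_nat hx 128
  push_cast at h1
  have h2 : Real.log (x + 127) ≤ digamma ((x + 127) + 1) :=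
    log_le_psi (by linarith)
  have h2' : digamma ((x + 127) + 1) = digamma (x + 128) := by
    congr 1
    ring
  have e : Real.log (x + 127) = Real.log 128 + Real.log ((x + 127) / 128) := by
    rw [← Real.log_mul (by norm_num) (by positivity)]
    congr 1
    ring
  have h3 : 1 - ((x + 127) / 128)⁻¹ ≤ Real.log ((x + 127) / 128) :=
    Real.one_sub_inv_le_log_of_pos (by positivity)
  rw [inv_div] at h3
  have h4 := Real.log_two_gt_d9
  rw [h2', h1, ] at h2
  rw [e, log128] at h2
  norm_num at h4 h ⊢
  simp only [one_div] at h1 h2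
  linarith

lemma nbU0 : digamma ((115:ℝ)/228) ≤ ((-19381:ℝ)/10000) :=
  psi_ub (by norm_num) (by norm_num [Finset.sum_range_succ])

lemma nbU1 : digamma ((29:ℝ)/57) ≤ ((-19169:ℝ)/10000) :=
  psi_ub (by norm_num) (by norm_num [Finset.sum_range_succ])

lemma nbU2 : digamma ((39:ℝ)/76) ≤ ((-237:ℝ)/125) :=
  psi_ub (by norm_num) (by norm_num [Finset.sum_range_succ])

lemma nbU3 : digamma ((55:ℝ)/57) ≤ ((-253:ℝ)/400) :=
  psi_ub (by norm_num) (by norm_num [Finset.sum_range_succ])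

lemma nbU4 : digamma ((56:ℝ)/57) ≤ ((-241:ℝ)/400) :=
  psi_ub (by norm_num) (by norm_num [Finset.sum_range_succ])

lemma nbU5 : digamma ((113:ℝ)/114) ≤ ((-2939:ℝ)/5000) :=
  psi_ub (by norm_num) (by norm_num [Finset.sum_range_succ])

lemma nbU6 : digamma (1:ℝ) ≤ ((-5733:ℝ)/10000) :=
  psi_ub (by norm_num) (by norm_num [Finset.sum_range_succ])

lemma nbU7 : digamma ((115:ℝ)/114) ≤ ((-5589:ℝ)/10000) :=
  psi_ub (by norm_num) (by norm_num [Finset.sum_range_succ])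

lemma nbU8 : digamma ((58:ℝ)/57) ≤ ((-681:ℝ)/1250) :=
  psi_ub (by norm_num) (by norm_num [Finset.sum_range_succ])

lemma nbU9 : digamma ((39:ℝ)/38) ≤ ((-1327:ℝ)/2500) :=
  psi_ub (by norm_num) (by norm_num [Finset.sum_range_succ])

lemma nbU10 : digamma ((59:ℝ)/57) ≤ ((-517:ℝ)/1000) :=
  psi_ub (by norm_num) (by norm_num [Finset.sum_range_succ])

lemma nbU11 : digamma ((20:ℝ)/19) ≤ ((-4899:ℝ)/10000) :=
  psi_ub (by norm_num) (by norm_num [Finset.sum_range_succ])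

lemma nbU12 : digamma ((85:ℝ)/57) ≤ ((161:ℝ)/5000) :=
  psi_ub (by norm_num) (by norm_num [Finset.sum_range_succ])

lemma nbU13 : digamma ((341:ℝ)/228) ≤ ((91:ℝ)/2500) :=
  psi_ub (by norm_num) (by norm_num [Finset.sum_range_succ])

lemma nbU14 : digamma ((3:ℝ)/2) ≤ ((81:ℝ)/2000) :=
  psi_ub (by norm_num) (by norm_num [Finset.sum_range_succ])

lemma nbL0 : ((-787:ℝ)/400) ≤ digamma ((1:ℝ)/2) :=
  psi_lb (by norm_num) (by norm_num [Finset.sum_range_succ])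

lemma nbL1 : ((-973:ℝ)/500) ≤ digamma ((115:ℝ)/228) :=
  psi_lb (by norm_num) (by norm_num [Finset.sum_range_succ])

lemma nbL2 : ((-1203:ℝ)/625) ≤ digamma ((29:ℝ)/57) :=
  psi_lb (by norm_num) (by norm_num [Finset.sum_range_succ])

lemma nbL3 : ((-839:ℝ)/1250) ≤ digamma ((18:ℝ)/19) :=
  psi_lb (by norm_num) (by norm_num [Finset.sum_range_succ])

lemma nbL4 : ((-1601:ℝ)/2500) ≤ digamma ((55:ℝ)/57) :=
  psi_lb (by norm_num) (by norm_num [Finset.sum_range_succ])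

lemma nbL5 : ((-6253:ℝ)/10000) ≤ digamma ((37:ℝ)/38) :=
  psi_lb (by norm_num) (by norm_num [Finset.sum_range_succ])

lemma nbL6 : ((-763:ℝ)/1250) ≤ digamma ((56:ℝ)/57) :=
  psi_lb (by norm_num) (by norm_num [Finset.sum_range_succ])

lemma nbL7 : ((-5957:ℝ)/10000) ≤ digamma ((113:ℝ)/114) :=
  psi_lb (by norm_num) (by norm_num [Finset.sum_range_succ])

lemma nbL8 : ((-1453:ℝ)/2500) ≤ digamma (1:ℝ) :=
  psi_lb (by norm_num) (by norm_num [Finset.sum_range_succ])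

lemma nbL9 : ((-1417:ℝ)/2500) ≤ digamma ((115:ℝ)/114) :=
  psi_lb (by norm_num) (by norm_num [Finset.sum_range_succ])

lemma nbL10 : ((-5527:ℝ)/10000) ≤ digamma ((58:ℝ)/57) :=
  psi_lb (by norm_num) (by norm_num [Finset.sum_range_succ])

lemma nbL11 : ((-5249:ℝ)/10000) ≤ digamma ((59:ℝ)/57) :=
  psi_lb (by norm_num) (by norm_num [Finset.sum_range_succ])

lemma nbL12 : ((101:ℝ)/5000) ≤ digamma ((113:ℝ)/76) :=
  psi_lb (by norm_num) (by norm_num [Finset.sum_range_succ])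

lemma nbL13 : ((243:ℝ)/10000) ≤ digamma ((85:ℝ)/57) :=
  psi_lb (by norm_num) (by norm_num [Finset.sum_range_succ])

lemma nbL14 : ((71:ℝ)/2500) ≤ digamma ((341:ℝ)/228) :=
  psi_lb (by norm_num) (by norm_num [Finset.sum_range_succ])

lemma B_of_E {s : ℝ} (h0 : 0 ≤ s) (h1 : s ≤ 1)
    (hL : 0 ≤ -2 * digamma (1 - 2 * s) - 2 * digamma (1 + 2 * s) +
      3 * digamma (1 - s) + 3 * digamma (1 + s) -
      digamma (3 / 2 - s / 2) - digamma (1 / 2 + s / 2))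
    (hU : -2 * digamma (1 - 2 * s) - 2 * digamma (1 + 2 * s) +
      3 * digamma (1 - s) + 3 * digamma (1 + s) -
      digamma (3 / 2 - s / 2) - digamma (1 / 2 + s / 2) ≤ 93/100) :
    1 < B s ∧ B s < 3 := by
  have hp := mul_nonneg (by linarith : (0:ℝ) ≤ 1 - s) hL
  have hq := mul_le_of_le_one_left hL (by linarith : 1 - s ≤ 1)
  unfold B
  constructor <;> linarith

lemma branch0 {s : ℝ} (h0 : (0:ℝ) ≤ s) (h1 : s ≤ ((1:ℝ)/114)) : 1 < B s ∧ B s < 3 := by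
  have mu1 : digamma ((56:ℝ)/57) ≤ digamma (1 - 2 * s) := psi_mono (by norm_num) (by nlinarith)
  have ml1 : digamma (1 - 2 * s) ≤ digamma (1:ℝ) := psi_mono (by nlinarith) (by nlinarith)
  have mu2 : digamma (1:ℝ) ≤ digamma (1 + 2 * s) := psi_mono (by norm_num) (by nlinarith)
  have ml2 : digamma (1 + 2 * s) ≤ digamma ((58:ℝ)/57) := psi_mono (by nlinarith) (by nlinarith)
  have mu3 : digamma (1 - s) ≤ digamma (1:ℝ) := psi_mono (by nlinarith) (by nlinarith)
  have ml3 : digamma ((113:ℝ)/114) ≤ digamma (1 - s) := psi_mono (by norm_num) (by nlinarith)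
  have mu4 : digamma (1 + s) ≤ digamma ((115:ℝ)/114) := psi_mono (by nlinarith) (by nlinarith)
  have ml4 : digamma (1:ℝ) ≤ digamma (1 + s) := psi_mono (by norm_num) (by nlinarith)
  have mu5 : digamma ((341:ℝ)/228) ≤ digamma (3 / 2 - s / 2) := psi_mono (by norm_num) (by nlinarith)
  have ml5 : digamma (3 / 2 - s / 2) ≤ digamma ((3:ℝ)/2) := psi_mono (by nlinarith) (by nlinarith)
  have mu6 : digamma ((1:ℝ)/2) ≤ digamma (1 / 2 + s / 2) := psi_mono (by norm_num) (by nlinarith)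
  have ml6 : digamma (1 / 2 + s / 2) ≤ digamma ((115:ℝ)/228) := psi_mono (by nlinarith) (by nlinarith)
  exact B_of_E (by linarith) (by linarith)
    (by linarith [nbU6, nbU8, nbL7, nbL8, nbU14, nbU0])
    (by linarith [nbL6, nbL8, nbU6, nbU7, nbL14, nbL0])

lemma branch1 {s : ℝ} (h0 : ((1:ℝ)/114) ≤ s) (h1 : s ≤ ((1:ℝ)/57)) : 1 < B s ∧ B s < 3 := by
  have mu1 : digamma ((55:ℝ)/57) ≤ digamma (1 - 2 * s) := psi_mono (by norm_num) (by nlinarith)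
  have ml1 : digamma (1 - 2 * s) ≤ digamma ((56:ℝ)/57) := psi_mono (by nlinarith) (by nlinarith)
  have mu2 : digamma ((58:ℝ)/57) ≤ digamma (1 + 2 * s) := psi_mono (by norm_num) (by nlinarith)
  have ml2 : digamma (1 + 2 * s) ≤ digamma ((59:ℝ)/57) := psi_mono (by nlinarith) (by nlinarith)
  have mu3 : digamma (1 - s) ≤ digamma ((113:ℝ)/114) := psi_mono (by nlinarith) (by nlinarith)
  have ml3 : digamma ((56:ℝ)/57) ≤ digamma (1 - s) := psi_mono (by norm_num) (by nlinarith)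
  have mu4 : digamma (1 + s) ≤ digamma ((58:ℝ)/57) := psi_mono (by nlinarith) (by nlinarith)
  have ml4 : digamma ((115:ℝ)/114) ≤ digamma (1 + s) := psi_mono (by norm_num) (by nlinarith)
  have mu5 : digamma ((85:ℝ)/57) ≤ digamma (3 / 2 - s / 2) := psi_mono (by norm_num) (by nlinarith)
  have ml5 : digamma (3 / 2 - s / 2) ≤ digamma ((341:ℝ)/228) := psi_mono (by nlinarith) (by nlinarith)
  have mu6 : digamma ((115:ℝ)/228) ≤ digamma (1 / 2 + s / 2) := psi_mono (by norm_num) (by nlinarith)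
  have ml6 : digamma (1 / 2 + s / 2) ≤ digamma ((29:ℝ)/57) := psi_mono (by nlinarith) (by nlinarith)
  exact B_of_E (by linarith) (by linarith)
    (by linarith [nbU4, nbU10, nbL6, nbL9, nbU13, nbU1])
    (by linarith [nbL4, nbL10, nbU5, nbU8, nbL13, nbL1])

lemma branch2 {s : ℝ} (h0 : ((1:ℝ)/57) ≤ s) (h1 : s ≤ ((1:ℝ)/38)) : 1 < B s ∧ B s < 3 := by
  have mu1 : digamma ((18:ℝ)/19) ≤ digamma (1 - 2 * s) := psi_mono (by norm_num) (by nlinarith)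
  have ml1 : digamma (1 - 2 * s) ≤ digamma ((55:ℝ)/57) := psi_mono (by nlinarith) (by nlinarith)
  have mu2 : digamma ((59:ℝ)/57) ≤ digamma (1 + 2 * s) := psi_mono (by norm_num) (by nlinarith)
  have ml2 : digamma (1 + 2 * s) ≤ digamma ((20:ℝ)/19) := psi_mono (by nlinarith) (by nlinarith)
  have mu3 : digamma (1 - s) ≤ digamma ((56:ℝ)/57) := psi_mono (by nlinarith) (by nlinarith)
  have ml3 : digamma ((37:ℝ)/38) ≤ digamma (1 - s) := psi_mono (by norm_num) (by nlinarith)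
  have mu4 : digamma (1 + s) ≤ digamma ((39:ℝ)/38) := psi_mono (by nlinarith) (by nlinarith)
  have ml4 : digamma ((58:ℝ)/57) ≤ digamma (1 + s) := psi_mono (by norm_num) (by nlinarith)
  have mu5 : digamma ((113:ℝ)/76) ≤ digamma (3 / 2 - s / 2) := psi_mono (by norm_num) (by nlinarith)
  have ml5 : digamma (3 / 2 - s / 2) ≤ digamma ((85:ℝ)/57) := psi_mono (by nlinarith) (by nlinarith)
  have mu6 : digamma ((29:ℝ)/57) ≤ digamma (1 / 2 + s / 2) := psi_mono (by norm_num) (by nlinarith)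
  have ml6 : digamma (1 / 2 + s / 2) ≤ digamma ((39:ℝ)/76) := psi_mono (by nlinarith) (by nlinarith)
  exact B_of_E (by linarith) (by linarith)
    (by linarith [nbU3, nbU11, nbL5, nbL10, nbU12, nbU2])
    (by linarith [nbL3, nbL11, nbU4, nbU9, nbL12, nbL2])

theorem B_bounds : ∀ s ∈ Set.Icc (0 : ℝ) (1 / 38), 1 < B s ∧ B s < 3 := by
  rintro s ⟨h0, h1⟩
  rcases le_or_gt s (1/114) with h | h
  · exact branch0 h0 h
  rcases le_or_gt s (1/57) with h2 | h2
  · exact branch1 h.le h2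
  · exact branch2 h2.le (by linarith)
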